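/- Let F : ℝⁿ × ℝᵐ → ℝ be continuously differentiable and globally strictly convex-concave, and assume its set Saddle(F) of saddle points is nonempty. Then Saddle(F) is globally asymptotically stable under the saddle-point dynamics ẋ = -∇ₓF(x,z), ż = ∇_zF(x,z): every saddle point is stable and every trajectory converges asymptotically to a single point of Saddle(F). -/

import Mathlib

open Metric Filter Topology Set

noncomputable section

/-- Euclidean space `ℝⁿ`. -/
abbrev En (n : ℕ) : Type := EuclideanSpace ℝ (Fin n)

variable {n m : ℕ}

/-- Partial gradient of `F` in the first (x) variable. -/
def gradX (F : En n × En m → ℝ) (p : En n × En m) : En n :=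
  gradient (fun x => F (x, p.2)) p.1

/-- Partial gradient of `F` in the second (z) variable. -/
def gradZ (F : En n × En m → ℝ) (p : En n × En m) : En m :=
  gradient (fun z => F (p.1, z)) p.2

/-- The saddle-point vector field `X_sp = (-∇ₓF, ∇_zF)`. -/
def Xsp (F : En n × En m → ℝ) (p : En n × En m) : En n × En m :=
  (-gradX F p, gradZ F p)

/-- A trajectory of the saddle-point dynamics, defined on `[0,∞)`. -/
def IsTrajectory (F : En n × En m → ℝ) (φ : ℝ → En n × En m) : Prop :=
  ∀ t : ℝ, 0 ≤ t → HasDerivAt φ (Xsp F (φ t)) t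

/-- `p` is a (local min-max) saddle point of `F`. -/
def IsSaddlePoint (F : En n × En m → ℝ) (p : En n × En m) : Prop :=
  ∃ U : Set (En n), ∃ W : Set (En m),
    IsOpen U ∧ IsOpen W ∧ p.1 ∈ U ∧ p.2 ∈ W ∧
    ∀ x ∈ U, ∀ z ∈ W, F (p.1, z) ≤ F p ∧ F p ≤ F (x, p.2)

/-- The set of saddle points of `F`. -/
def SaddleSet (F : En n × En m → ℝ) : Set (En n × En m) :=
  {p | IsSaddlePoint F p}

/-- A point `p` is stable for the saddle-point dynamics of `F`. -/
def StablePt (F : En n × En m → ℝ) (p : En n × En m) : Prop :=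
  ∀ ε > 0, ∃ δ > 0, ∀ φ : ℝ → En n × En m, IsTrajectory F φ →
    dist (φ 0) p < δ → ∀ t : ℝ, 0 ≤ t → dist (φ t) p < ε

/-- `S` is an isolated path connected component of `T`. -/
def IsIsolatedPathComponent (S T : Set (En n × En m)) : Prop :=
  S ⊆ T ∧ (∀ a ∈ S, ∀ b ∈ S, JoinedIn S a b) ∧
    ∃ U : Set (En n × En m), IsOpen U ∧ S ⊆ U ∧ U ∩ T = S

/-- `F` is locally convex-concave at `p`. -/
def LocallyConvexConcaveAt (F : En n × En m → ℝ) (p : En n × En m) : Prop :=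
  ∃ U : Set (En n × En m), IsOpen U ∧ p ∈ U ∧
    ∀ q ∈ U, ConvexOn ℝ {x : En n | (x, q.2) ∈ U} (fun x => F (x, q.2)) ∧
      ConcaveOn ℝ {z : En m | (q.1, z) ∈ U} (fun z => F (q.1, z))

/-- `F` is locally strictly convex-concave at `p`. -/
def LocallyStrictlyConvexConcaveAt (F : En n × En m → ℝ) (p : En n × En m) : Prop :=
  LocallyConvexConcaveAt F p ∧
    ((∃ r > 0, StrictConvexOn ℝ (ball p.1 r) (fun x => F (x, p.2))) ∨
      (∃ r > 0, StrictConcaveOn ℝ (ball p.2 r) (fun z => F (p.1, z))))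

open scoped RealInnerProductSpace

section Helpers
variable {E : Type*} [NormedAddCommGroup E] [InnerProductSpace ℝ E] [CompleteSpace E]

/-- Gradient inequality for convex differentiable functions. -/
lemma grad_ineq {f : E → ℝ} {g : E} {x y : E} (hf : ConvexOn ℝ univ f)
    (hg : HasGradientAt f g x) : f x + ⟪g, y - x⟫ ≤ f y := by
  have hcd : HasDerivAt (fun t : ℝ => f (x + t • (y - x))) ⟪g, y - x⟫ 0 := by
    have hc : HasDerivAt (fun t : ℝ => x + t • (y - x)) (y - x) 0 := by
      simpa using ((hasDerivAt_id (0:ℝ)).smul_const (y - x)).const_add x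
    have hg' : HasFDerivAt f ((InnerProductSpace.toDual ℝ E) g) (x + (0:ℝ) • (y - x)) := by
      simpa using hg.hasFDerivAt
    have := hg'.comp_hasDerivAt 0 hc
    simpa [InnerProductSpace.toDual_apply_apply, Function.comp_def] using this
  have hconv : ConvexOn ℝ univ (fun t : ℝ => f (x + t • (y - x))) := by
    have := hf.comp_affineMap (AffineMap.lineMap x y)
    have heq : (fun t : ℝ => f (x + t • (y - x))) = f ∘ (AffineMap.lineMap x y) := by
      funext t
      simp [AffineMap.lineMap_apply, smul_sub]
      congr 1
      module
    rw [heq]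
    simpa using this
  have hs := hconv.le_slope_of_hasDerivAt (mem_univ (0:ℝ)) (mem_univ (1:ℝ)) one_pos hcd
  rw [slope_def_field] at hs
  simp at hs
  linarith

lemma HasGradientAt.neg' {f : E → ℝ} {g : E} {x : E} (hg : HasGradientAt f g x) :
    HasGradientAt (fun y => -(f y)) (-g) x := by
  have := hg.hasFDerivAt.fun_neg
  rw [hasGradientAt_iff_hasFDerivAt]
  simpa [map_neg] using this

/-- Gradient inequality for concave differentiable functions. -/
lemma grad_ineq_concave {f : E → ℝ} {g : E} {x y : E} (hf : ConcaveOn ℝ univ f)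
    (hg : HasGradientAt f g x) : f y ≤ f x + ⟪g, y - x⟫ := by
  have := grad_ineq (hf.neg) (hg.neg') (y := y)
  simp only [inner_neg_left, Pi.neg_apply] at this
  linarith

/-- If the derivative is bounded above by `-r` on `[a,b]`, the function decreases by `r*(b-a)`. -/
lemma decrement {W W' : ℝ → ℝ} {a b r : ℝ} (hab : a ≤ b)
    (hd : ∀ t ∈ Icc a b, HasDerivAt W (W' t) t) (hle : ∀ t ∈ Icc a b, W' t ≤ -r) :
    W b ≤ W a - r * (b - a) := by
  have key : AntitoneOn (fun t => W t + r * t) (Icc a b) := by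
    apply antitoneOn_of_deriv_nonpos (convex_Icc a b)
    · exact fun t ht => ((hd t ht).continuousAt.add (by fun_prop)).continuousWithinAt
    · intro t ht
      have ht' : t ∈ Icc a b := interior_subset ht
      exact (((hd t ht').add ((hasDerivAt_id t).const_mul r)).differentiableAt).differentiableWithinAt
    · intro t ht
      have ht' : t ∈ Icc a b := interior_subset ht
      have hD : HasDerivAt (fun t => W t + r * t) (W' t + r) t := by
        simpa using (hd t ht').fun_add ((hasDerivAt_id t).const_mul r)
      rw [hD.deriv]
      have := hle t ht'
      linarith
  have := key (left_mem_Icc.2 hab) (right_mem_Icc.2 hab) hab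
  simp only at this
  nlinarith

/-- Antitone on `Ici 0` if derivative nonpositive there. -/
lemma antitone_of_deriv_nonpos_Ici {W W' : ℝ → ℝ}
    (hd : ∀ t ∈ Ici (0:ℝ), HasDerivAt W (W' t) t) (hle : ∀ t ∈ Ici (0:ℝ), W' t ≤ 0) :
    AntitoneOn W (Ici 0) := by
  apply antitoneOn_of_deriv_nonpos (convex_Ici 0)
  · exact fun t ht => (hd t ht).continuousAt.continuousWithinAt
  · intro t ht
    have ht' : t ∈ Ici (0:ℝ) := interior_subset ht
    exact (hd t ht').differentiableAt.differentiableWithinAt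
  · intro t ht
    have ht' : t ∈ Ici (0:ℝ) := interior_subset ht
    rw [(hd t ht').deriv]; exact hle t ht'

end Helpers

section Partial
variable {n m : ℕ} {F : En n × En m → ℝ}

lemma diffX (hF : ContDiff ℝ 1 F) (p : En n × En m) :
    DifferentiableAt ℝ (fun x => F (x, p.2)) p.1 :=
  ((hF.differentiable one_ne_zero) p).comp p.1
    (differentiableAt_id.prodMk (differentiableAt_const p.2))

lemma diffZ (hF : ContDiff ℝ 1 F) (p : En n × En m) :
    DifferentiableAt ℝ (fun z => F (p.1, z)) p.2 :=
  ((hF.differentiable one_ne_zero) p).comp p.2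
    ((differentiableAt_const p.1).prodMk differentiableAt_id)

lemma hasGradX (hF : ContDiff ℝ 1 F) (p : En n × En m) :
    HasGradientAt (fun x => F (x, p.2)) (gradX F p) p.1 :=
  (diffX hF p).hasGradientAt

lemma hasGradZ (hF : ContDiff ℝ 1 F) (p : En n × En m) :
    HasGradientAt (fun z => F (p.1, z)) (gradZ F p) p.2 :=
  (diffZ hF p).hasGradientAt

lemma gradX_eq (hF : ContDiff ℝ 1 F) (p : En n × En m) :
    gradX F p = (InnerProductSpace.toDual ℝ (En n)).symm
      ((fderiv ℝ F p).comp (ContinuousLinearMap.inl ℝ (En n) (En m))) := by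
  have h1 : HasFDerivAt (fun x => F (x, p.2))
      ((fderiv ℝ F p).comp (ContinuousLinearMap.inl ℝ (En n) (En m))) p.1 := by
    have hFd : HasFDerivAt F (fderiv ℝ F p) (p.1, p.2) := by
      simpa using ((hF.differentiable one_ne_zero) p).hasFDerivAt
    exact hFd.comp p.1 (hasFDerivAt_prodMk_left p.1 p.2)
  rw [gradX, gradient, h1.fderiv]

lemma gradZ_eq (hF : ContDiff ℝ 1 F) (p : En n × En m) :
    gradZ F p = (InnerProductSpace.toDual ℝ (En m)).symm
      ((fderiv ℝ F p).comp (ContinuousLinearMap.inr ℝ (En n) (En m))) := by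
  have h1 : HasFDerivAt (fun z => F (p.1, z))
      ((fderiv ℝ F p).comp (ContinuousLinearMap.inr ℝ (En n) (En m))) p.2 := by
    have hFd : HasFDerivAt F (fderiv ℝ F p) (p.1, p.2) := by
      simpa using ((hF.differentiable one_ne_zero) p).hasFDerivAt
    exact hFd.comp p.2 (hasFDerivAt_prodMk_right p.1 p.2)
  rw [gradZ, gradient, h1.fderiv]

lemma continuous_gradX (hF : ContDiff ℝ 1 F) : Continuous (gradX F) := by
  have : Continuous fun p => (InnerProductSpace.toDual ℝ (En n)).symm
      ((fderiv ℝ F p).comp (ContinuousLinearMap.inl ℝ (En n) (En m))) :=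
    (InnerProductSpace.toDual ℝ (En n)).symm.continuous.comp
      ((hF.continuous_fderiv one_ne_zero).clm_comp continuous_const)
  exact this.congr fun p => (gradX_eq hF p).symm

lemma continuous_gradZ (hF : ContDiff ℝ 1 F) : Continuous (gradZ F) := by
  have : Continuous fun p => (InnerProductSpace.toDual ℝ (En m)).symm
      ((fderiv ℝ F p).comp (ContinuousLinearMap.inr ℝ (En n) (En m))) :=
    (InnerProductSpace.toDual ℝ (En m)).symm.continuous.comp
      ((hF.continuous_fderiv one_ne_zero).clm_comp continuous_const)
  exact this.congr fun p => (gradZ_eq hF p).symm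

end Partial

section Key
variable {n m : ℕ} {F : En n × En m → ℝ}

lemma key_ineq (hF : ContDiff ℝ 1 F)
    (hcc : ∀ q : En n × En m,
      ConvexOn ℝ univ (fun x => F (x, q.2)) ∧ ConcaveOn ℝ univ (fun z => F (q.1, z)))
    (p' q : En n × En m) :
    ⟪-gradX F q, q.1 - p'.1⟫ + ⟪gradZ F q, q.2 - p'.2⟫
      ≤ F (p'.1, q.2) - F (q.1, p'.2) := by
  have h1 := grad_ineq (hcc q).1 (hasGradX hF q) (y := p'.1)
  have h2 := grad_ineq_concave (hcc q).2 (hasGradZ hF q) (y := p'.2)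
  simp only [Prod.mk.eta] at h1 h2
  rw [inner_sub_right] at h1 h2
  rw [inner_neg_left, inner_sub_right, inner_sub_right]
  linarith

lemma grad_zero_of_localMin (hF : ContDiff ℝ 1 F) {p : En n × En m}
    (hmin : IsLocalMin (fun x => F (x, p.2)) p.1) : gradX F p = 0 := by
  have h := hmin.hasFDerivAt_eq_zero ((hasGradX hF p).hasFDerivAt)
  have := congrArg (InnerProductSpace.toDual ℝ (En n)).symm h
  simpa using this

lemma grad_zero_of_localMax (hF : ContDiff ℝ 1 F) {p : En n × En m}
    (hmax : IsLocalMax (fun z => F (p.1, z)) p.2) : gradZ F p = 0 := by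
  have h := hmax.hasFDerivAt_eq_zero ((hasGradZ hF p).hasFDerivAt)
  have := congrArg (InnerProductSpace.toDual ℝ (En m)).symm h
  simpa using this

lemma bounds_of_grad_zero (hF : ContDiff ℝ 1 F)
    (hcc : ∀ q : En n × En m,
      ConvexOn ℝ univ (fun x => F (x, q.2)) ∧ ConcaveOn ℝ univ (fun z => F (q.1, z)))
    {q : En n × En m} (hgx : gradX F q = 0) (hgz : gradZ F q = 0) :
    (∀ x, F q ≤ F (x, q.2)) ∧ (∀ z, F (q.1, z) ≤ F q) := by
  constructor
  · intro x
    have := grad_ineq (hcc q).1 (hasGradX hF q) (y := x)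
    rw [hgx] at this
    simpa using this
  · intro z
    have := grad_ineq_concave (hcc q).2 (hasGradZ hF q) (y := z)
    rw [hgz] at this
    simpa using this

lemma saddle_of_grad_zero (hF : ContDiff ℝ 1 F)
    (hcc : ∀ q : En n × En m,
      ConvexOn ℝ univ (fun x => F (x, q.2)) ∧ ConcaveOn ℝ univ (fun z => F (q.1, z)))
    {q : En n × En m} (hgx : gradX F q = 0) (hgz : gradZ F q = 0) :
    IsSaddlePoint F q := by
  obtain ⟨hb1, hb2⟩ := bounds_of_grad_zero hF hcc hgx hgz
  exact ⟨univ, univ, isOpen_univ, isOpen_univ, mem_univ _, mem_univ _,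
    fun x _ z _ => ⟨hb2 z, hb1 x⟩⟩

lemma saddle_global (hF : ContDiff ℝ 1 F)
    (hcc : ∀ q : En n × En m,
      ConvexOn ℝ univ (fun x => F (x, q.2)) ∧ ConcaveOn ℝ univ (fun z => F (q.1, z)))
    {p : En n × En m} (hp : IsSaddlePoint F p) :
    (∀ x, F p ≤ F (x, p.2)) ∧ (∀ z, F (p.1, z) ≤ F p) := by
  obtain ⟨U, W, hU, hW, hpU, hpW, hUW⟩ := hp
  have hgx : gradX F p = 0 := by
    apply grad_zero_of_localMin hF
    filter_upwards [hU.mem_nhds hpU] with x hx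
    simpa using (hUW x hx p.2 hpW).2
  have hgz : gradZ F p = 0 := by
    apply grad_zero_of_localMax hF
    filter_upwards [hW.mem_nhds hpW] with z hz
    simpa using (hUW p.1 hpU z hz).1
  exact bounds_of_grad_zero hF hcc hgx hgz

end Key

section Traj
variable {n m : ℕ} {F : En n × En m → ℝ} {φ : ℝ → En n × En m}

/-- The (Euclidean) squared distance to `p'` along the trajectory. -/
def Wfn (φ : ℝ → En n × En m) (p' : En n × En m) (t : ℝ) : ℝ :=
  ⟪(φ t).1 - p'.1, (φ t).1 - p'.1⟫ + ⟪(φ t).2 - p'.2, (φ t).2 - p'.2⟫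

lemma Wfn_nonneg (p' : En n × En m) (t : ℝ) : 0 ≤ Wfn φ p' t :=
  add_nonneg real_inner_self_nonneg real_inner_self_nonneg

lemma hasDerivX (hφ : IsTrajectory F φ) {t : ℝ} (ht : 0 ≤ t) :
    HasDerivAt (fun s => (φ s).1) (-gradX F (φ t)) t := by
  have h1 := ((ContinuousLinearMap.fst ℝ (En n) (En m)).hasFDerivAt
    (x := φ t)).comp_hasDerivAt t (hφ t ht)
  simpa [Xsp, Function.comp_def] using h1

lemma hasDerivZ (hφ : IsTrajectory F φ) {t : ℝ} (ht : 0 ≤ t) :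
    HasDerivAt (fun s => (φ s).2) (gradZ F (φ t)) t := by
  have h1 := ((ContinuousLinearMap.snd ℝ (En n) (En m)).hasFDerivAt
    (x := φ t)).comp_hasDerivAt t (hφ t ht)
  simpa [Xsp, Function.comp_def] using h1

lemma Wfn_deriv (hφ : IsTrajectory F φ) (p' : En n × En m) {t : ℝ} (ht : 0 ≤ t) :
    HasDerivAt (Wfn φ p')
      (2 * (⟪-gradX F (φ t), (φ t).1 - p'.1⟫ + ⟪gradZ F (φ t), (φ t).2 - p'.2⟫)) t := by
  have hu : HasDerivAt (fun s => (φ s).1 - p'.1) (-gradX F (φ t)) t :=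
    (hasDerivX hφ ht).sub_const _
  have hv : HasDerivAt (fun s => (φ s).2 - p'.2) (gradZ F (φ t)) t :=
    (hasDerivZ hφ ht).sub_const _
  have h1 := hu.inner ℝ hu
  have h2 := hv.inner ℝ hv
  have := h1.fun_add h2
  refine this.congr_deriv ?_
  rw [real_inner_comm ((φ t).1 - p'.1), real_inner_comm ((φ t).2 - p'.2)]
  ring

lemma Wfn_anti (hF : ContDiff ℝ 1 F)
    (hcc : ∀ q : En n × En m,
      ConvexOn ℝ univ (fun x => F (x, q.2)) ∧ ConcaveOn ℝ univ (fun z => F (q.1, z)))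
    (hφ : IsTrajectory F φ) {p' : En n × En m}
    (h1 : ∀ x, F p' ≤ F (x, p'.2)) (h2 : ∀ z, F (p'.1, z) ≤ F p') :
    AntitoneOn (Wfn φ p') (Ici 0) := by
  apply antitone_of_deriv_nonpos_Ici
    (W' := fun t => 2 * (⟪-gradX F (φ t), (φ t).1 - p'.1⟫ + ⟪gradZ F (φ t), (φ t).2 - p'.2⟫))
    (fun t ht => Wfn_deriv hφ p' ht)
  intro t _
  have hk := key_ineq hF hcc p' (φ t)
  have b1 := h1 (φ t).1
  have b2 := h2 (φ t).2
  linarith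

lemma dist_le_sqrt_Wfn (p' : En n × En m) (t : ℝ) :
    dist (φ t) p' ≤ Real.sqrt (Wfn φ p' t) := by
  have key : ∀ (a : ℝ), 0 ≤ a → a ^ 2 ≤ Wfn φ p' t → a ≤ Real.sqrt (Wfn φ p' t) := by
    intro a ha h
    rw [← Real.sqrt_sq ha]
    exact Real.sqrt_le_sqrt h
  rw [Prod.dist_eq]
  apply max_le
  · apply key _ dist_nonneg
    rw [dist_eq_norm, ← real_inner_self_eq_norm_sq]
    exact le_add_of_nonneg_right real_inner_self_nonneg
  · apply key _ dist_nonneg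
    rw [dist_eq_norm, ← real_inner_self_eq_norm_sq]
    exact le_add_of_nonneg_left real_inner_self_nonneg

lemma Wfn_le (p' : En n × En m) (t : ℝ) :
    Wfn φ p' t ≤ 2 * dist (φ t) p' ^ 2 := by
  have h1 : dist (φ t).1 p'.1 ≤ dist (φ t) p' := by
    rw [Prod.dist_eq]; exact le_max_left _ _
  have h2 : dist (φ t).2 p'.2 ≤ dist (φ t) p' := by
    rw [Prod.dist_eq]; exact le_max_right _ _
  have e1 : ⟪(φ t).1 - p'.1, (φ t).1 - p'.1⟫ = dist (φ t).1 p'.1 ^ 2 := by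
    rw [real_inner_self_eq_norm_sq, dist_eq_norm]
  have e2 : ⟪(φ t).2 - p'.2, (φ t).2 - p'.2⟫ = dist (φ t).2 p'.2 ^ 2 := by
    rw [real_inner_self_eq_norm_sq, dist_eq_norm]
  have d1 : (0:ℝ) ≤ dist (φ t).1 p'.1 := dist_nonneg
  have d2 : (0:ℝ) ≤ dist (φ t).2 p'.2 := dist_nonneg
  rw [Wfn, e1, e2]
  nlinarith

/-- Distance to a "global saddle" point never exceeds `√2` times an earlier distance. -/
lemma dist_traj_le (hF : ContDiff ℝ 1 F)
    (hcc : ∀ q : En n × En m,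
      ConvexOn ℝ univ (fun x => F (x, q.2)) ∧ ConcaveOn ℝ univ (fun z => F (q.1, z)))
    (hφ : IsTrajectory F φ) {p' : En n × En m}
    (h1 : ∀ x, F p' ≤ F (x, p'.2)) (h2 : ∀ z, F (p'.1, z) ≤ F p')
    {s t : ℝ} (hs : 0 ≤ s) (hst : s ≤ t) :
    dist (φ t) p' ≤ Real.sqrt 2 * dist (φ s) p' := by
  have hWs := Wfn_anti hF hcc hφ h1 h2 (mem_Ici.2 hs) (mem_Ici.2 (hs.trans hst)) hst
  calc dist (φ t) p' ≤ Real.sqrt (Wfn φ p' t) := dist_le_sqrt_Wfn p' t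
    _ ≤ Real.sqrt (Wfn φ p' s) := Real.sqrt_le_sqrt hWs
    _ ≤ Real.sqrt (2 * dist (φ s) p' ^ 2) := Real.sqrt_le_sqrt (Wfn_le p' s)
    _ = Real.sqrt 2 * dist (φ s) p' := by
        rw [Real.sqrt_mul (by norm_num), Real.sqrt_sq dist_nonneg]

end Traj

/-- Barbalat-type lemma: a nonnegative Lipschitz quantity dominated by the negative
derivative of a bounded-below monotone function tends to zero. -/
lemma barbalat {W W' h : ℝ → ℝ} {L : ℝ}
    (hW : ∀ t ∈ Ici (0:ℝ), HasDerivAt W (W' t) t)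
    (hW' : ∀ t ∈ Ici (0:ℝ), W' t ≤ -h t)
    (hh : ∀ t ∈ Ici (0:ℝ), 0 ≤ h t)
    (hWpos : ∀ t ∈ Ici (0:ℝ), 0 ≤ W t)
    (hL : 0 ≤ L)
    (hLip : ∀ s t : ℝ, 0 ≤ s → s ≤ t → |h t - h s| ≤ L * (t - s)) :
    Tendsto h atTop (𝓝 0) := by
  have hanti : AntitoneOn W (Ici 0) :=
    antitone_of_deriv_nonpos_Ici hW (fun t ht => (hW' t ht).trans (neg_nonpos.2 (hh t ht)))
  set V : ℝ → ℝ := fun t => W (max t 0) with hVdef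
  have hVanti : Antitone V := fun s t hst =>
    hanti (mem_Ici.2 (le_max_right s 0)) (mem_Ici.2 (le_max_right t 0))
      (max_le_max hst le_rfl)
  have hVbdd : BddBelow (range V) :=
    ⟨0, by rintro _ ⟨t, rfl⟩; exact hWpos _ (mem_Ici.2 (le_max_right t 0))⟩
  have hVtend := tendsto_atTop_ciInf hVanti hVbdd
  set c := ⨅ t, V t with hcdef
  have hcle : ∀ t : ℝ, 0 ≤ t → c ≤ W t := by
    intro t ht
    have h1 : c ≤ V t := ciInf_le hVbdd t
    simpa [hVdef, max_eq_left ht] using h1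
  by_contra hcon
  rw [Metric.tendsto_atTop] at hcon
  push_neg at hcon
  obtain ⟨ε, hε, hfreq⟩ := hcon
  set δ := ε / (2 * (L + 1)) with hδdef
  have hδpos : 0 < δ := by positivity
  rw [Metric.tendsto_atTop] at hVtend
  obtain ⟨N, hN⟩ := hVtend (ε / 2 * δ) (by positivity)
  obtain ⟨t₁, ht₁N, ht₁dist⟩ := hfreq (max N 0)
  have ht₁0 : 0 ≤ t₁ := le_trans (le_max_right N 0) ht₁N
  have hht₁ : ε ≤ h t₁ := by
    rw [Real.dist_0_eq_abs, abs_of_nonneg (hh t₁ ht₁0)] at ht₁dist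
    exact ht₁dist
  have hLδ : L * δ ≤ ε / 2 := by
    rw [hδdef, mul_div_assoc']
    rw [div_le_div_iff₀ (by positivity) (by norm_num : (0:ℝ) < 2)]
    nlinarith
  have hlow : ∀ t ∈ Icc t₁ (t₁ + δ), ε / 2 ≤ h t := by
    intro t ⟨hta, htb⟩
    have := hLip t₁ t ht₁0 hta
    have habs : h t₁ - h t ≤ L * (t - t₁) := by
      have := abs_le.1 this
      linarith [this.1]
    have : L * (t - t₁) ≤ L * δ := by
      apply mul_le_mul_of_nonneg_left _ hL
      linarith
    linarith
  have hdec : W (t₁ + δ) ≤ W t₁ - (ε / 2) * δ := by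
    have := decrement (W := W) (W' := W') (a := t₁) (b := t₁ + δ) (r := ε / 2)
      (by linarith)
      (fun t ht => hW t (mem_Ici.2 (le_trans ht₁0 ht.1)))
      (fun t ht => le_trans (hW' t (mem_Ici.2 (le_trans ht₁0 ht.1)))
        (by have := hlow t ht; linarith))
    simpa using this
  have hWt₁ : W t₁ < c + ε / 2 * δ := by
    have := hN t₁ (le_trans (le_max_left N 0) ht₁N)
    rw [Real.dist_eq] at this
    have h1 := abs_lt.1 this
    have : V t₁ = W t₁ := by simp [hVdef, max_eq_left ht₁0]
    linarith [h1.1, h1.2]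
  have := hcle (t₁ + δ) (by linarith)
  linarith

/-- Along a bounded curve, if the values of a strictly convex function tend to its minimum
value, the curve tends to the (unique) minimizer. -/
lemma tendsto_min_of_strict {n : ℕ} {f : En n → ℝ} (hf : Continuous f)
    (hsc : StrictConvexOn ℝ univ f) {x0 : En n} (hmin : ∀ x, f x0 ≤ f x)
    {K : Set (En n)} (hK : IsCompact K) {x : ℝ → En n}
    (hxK : ∀ t : ℝ, 0 ≤ t → x t ∈ K)
    (hft : Tendsto (fun t => f (x t)) atTop (𝓝 (f x0))) :
    Tendsto x atTop (𝓝 x0) := by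
  rw [Metric.tendsto_atTop]
  by_contra hcon
  push_neg at hcon
  obtain ⟨ε, hε, hfreq⟩ := hcon
  have hseq : ∀ k : ℕ, ∃ t : ℝ, t ≥ (k : ℝ) ∧ ε ≤ dist (x t) x0 := fun k => hfreq (k : ℝ)
  choose ts hts hdist using hseq
  have hts0 : ∀ k, (0:ℝ) ≤ ts k := fun k => le_trans (by positivity) (hts k)
  have htsatTop : Tendsto ts atTop atTop :=
    tendsto_atTop_mono hts tendsto_natCast_atTop_atTop
  obtain ⟨y, hyK, σ, hσ, hconv⟩ := hK.tendsto_subseq (fun k => hxK (ts k) (hts0 k))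
  have h1 : Tendsto (fun j => f (x (ts (σ j)))) atTop (𝓝 (f y)) :=
    (hf.continuousAt.tendsto).comp hconv
  have h2 : Tendsto (fun j => f (x (ts (σ j)))) atTop (𝓝 (f x0)) :=
    hft.comp (htsatTop.comp hσ.tendsto_atTop)
  have hfy : f y = f x0 := tendsto_nhds_unique h1 h2
  have hydist : ε ≤ dist y x0 := by
    have hd : Tendsto (fun j => dist (x (ts (σ j))) x0) atTop (𝓝 (dist y x0)) :=
      hconv.dist tendsto_const_nhds
    exact ge_of_tendsto hd (Eventually.of_forall fun j => hdist (σ j))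
  have hyne : x0 ≠ y := by
    intro h
    rw [h] at hydist
    simp at hydist
    linarith
  have hmid := hsc.2 (mem_univ x0) (mem_univ y) hyne
    (by norm_num : (0:ℝ) < 1/2) (by norm_num : (0:ℝ) < 1/2) (by norm_num)
  have := hmin ((1/2:ℝ) • x0 + (1/2:ℝ) • y)
  rw [hfy] at hmid
  simp only [smul_eq_mul] at hmid
  linarith

set_option maxHeartbeats 2000000 in
/-- Main convergence argument, in the case that `x ↦ F (x, p*.2)` is strictly convex. -/
theorem main_conv {n m : ℕ} (F : En n × En m → ℝ) (hF : ContDiff ℝ 1 F)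
    (hcc : ∀ q : En n × En m,
      ConvexOn ℝ univ (fun x => F (x, q.2)) ∧ ConcaveOn ℝ univ (fun z => F (q.1, z)))
    (pst : En n × En m)
    (hb1 : ∀ x, F pst ≤ F (x, pst.2)) (hb2 : ∀ z, F (pst.1, z) ≤ F pst)
    (hstrict : StrictConvexOn ℝ univ (fun x => F (x, pst.2)))
    (φ : ℝ → En n × En m) (hφ : IsTrajectory F φ) :
    ∃ q : En n × En m, (∀ x, F q ≤ F (x, q.2)) ∧ (∀ z, F (q.1, z) ≤ F q)
      ∧ Tendsto φ atTop (𝓝 q) := by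
  -- the trajectory is bounded
  set R : ℝ := Real.sqrt (Wfn φ pst 0) with hRdef
  have hWanti : AntitoneOn (Wfn φ pst) (Ici 0) := Wfn_anti hF hcc hφ hb1 hb2
  have hR : ∀ t : ℝ, 0 ≤ t → dist (φ t) pst ≤ R := by
    intro t ht
    calc dist (φ t) pst ≤ Real.sqrt (Wfn φ pst t) := dist_le_sqrt_Wfn pst t
      _ ≤ R := Real.sqrt_le_sqrt (hWanti (mem_Ici.2 le_rfl) (mem_Ici.2 ht) ht)
  set K : Set (En n × En m) := closedBall pst R with hKdef
  have hK : IsCompact K := isCompact_closedBall pst R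
  have hKconv : Convex ℝ K := convex_closedBall pst R
  have hφK : ∀ t : ℝ, 0 ≤ t → φ t ∈ K := fun t ht => mem_closedBall.2 (hR t ht)
  -- bound on the vector field over K
  obtain ⟨C, hC⟩ := hK.exists_bound_of_continuousOn
    (f := fun q => (gradX F q, gradZ F q))
    (((continuous_gradX hF).prodMk (continuous_gradZ hF)).continuousOn)
  set B : ℝ := |C| + 1 with hBdef
  have hBpos : 0 < B := by positivity
  have hBX : ∀ q ∈ K, ‖gradX F q‖ ≤ B := by
    intro q hq
    calc ‖gradX F q‖ ≤ ‖((gradX F q, gradZ F q) : En n × En m)‖ := by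
          rw [Prod.norm_def]; exact le_max_left _ _
      _ ≤ C := hC q hq
      _ ≤ B := by rw [hBdef]; have := le_abs_self C; linarith
  have hBZ : ∀ q ∈ K, ‖gradZ F q‖ ≤ B := by
    intro q hq
    calc ‖gradZ F q‖ ≤ ‖((gradX F q, gradZ F q) : En n × En m)‖ := by
          rw [Prod.norm_def]; exact le_max_right _ _
      _ ≤ C := hC q hq
      _ ≤ B := by rw [hBdef]; have := le_abs_self C; linarith
  -- the trajectory is B-Lipschitz on [0,∞)
  have hφLip : ∀ s t : ℝ, 0 ≤ s → s ≤ t → dist (φ t) (φ s) ≤ B * (t - s) := by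
    intro s t hs hst
    have := (convex_Ici (0:ℝ)).norm_image_sub_le_of_norm_hasDerivWithin_le
      (f := φ) (f' := fun t => Xsp F (φ t)) (C := B)
      (fun u hu => (hφ u hu).hasDerivWithinAt)
      (fun u hu => by
        simp only [Xsp, Prod.norm_def, norm_neg]
        exact max_le (hBX _ (hφK u hu)) (hBZ _ (hφK u hu)))
      (mem_Ici.2 hs) (mem_Ici.2 (hs.trans hst))
    rw [dist_eq_norm]
    calc ‖φ t - φ s‖ ≤ B * ‖t - s‖ := this
      _ = B * (t - s) := by rw [Real.norm_eq_abs, abs_of_nonneg (by linarith)]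
  -- the function g measuring saddle-gap
  set v : ℝ := F pst with hvdef
  set g : En n × En m → ℝ := fun q => (F (q.1, pst.2) - v) + (v - F (pst.1, q.2)) with hgdef
  have hg : ContDiff ℝ 1 g := by
    apply ContDiff.add
    · exact (hF.comp ((contDiff_fst).prodMk contDiff_const)).sub contDiff_const
    · exact contDiff_const.sub (hF.comp (contDiff_const.prodMk contDiff_snd))
  have hgnonneg : ∀ q : En n × En m, 0 ≤ g q := by
    intro q
    have h1 := hb1 q.1
    have h2 := hb2 q.2
    simp only [hgdef]
    linarith
  -- g is Lipschitz on K
  obtain ⟨Cg, hCg⟩ := hK.exists_bound_of_continuousOn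
    ((hg.continuous_fderiv one_ne_zero).continuousOn)
  set Lg : ℝ := |Cg| with hLgdef
  have hgLip : ∀ p ∈ K, ∀ q ∈ K, ‖g p - g q‖ ≤ Lg * ‖p - q‖ := by
    intro p hp q hq
    exact hKconv.norm_image_sub_le_of_norm_hasFDerivWithin_le
      (fun u hu => ((hg.differentiable one_ne_zero) u).hasFDerivAt.hasFDerivWithinAt)
      (fun u hu => le_trans (hCg u hu) (le_abs_self Cg)) hq hp
  -- Barbalat: g (φ t) → 0
  have hgtend : Tendsto (fun t => g (φ t)) atTop (𝓝 0) := by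
    have h2 : Tendsto (fun t => 2 * g (φ t)) atTop (𝓝 0) := by
      apply barbalat (W := Wfn φ pst)
        (W' := fun t => 2 * (⟪-gradX F (φ t), (φ t).1 - pst.1⟫
          + ⟪gradZ F (φ t), (φ t).2 - pst.2⟫))
        (L := 2 * Lg * B)
      · exact fun t ht => Wfn_deriv hφ pst ht
      · intro t ht
        have hk := key_ineq hF hcc pst (φ t)
        simp only [hgdef]
        linarith
      · intro t ht
        have := hgnonneg (φ t)
        linarith
      · exact fun t ht => Wfn_nonneg pst t
      · positivity
      · intro s t hs hst
        have h1 := hgLip (φ t) (hφK t (hs.trans hst)) (φ s) (hφK s hs)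
        have h2 := hφLip s t hs hst
        rw [dist_eq_norm] at h2
        have habs : |2 * g (φ t) - 2 * g (φ s)| = 2 * ‖g (φ t) - g (φ s)‖ := by
          rw [Real.norm_eq_abs, show 2 * g (φ t) - 2 * g (φ s) = 2 * (g (φ t) - g (φ s)) by ring,
            abs_mul, abs_two]
        rw [habs]
        have hLg0 : 0 ≤ Lg := abs_nonneg Cg
        calc 2 * ‖g (φ t) - g (φ s)‖ ≤ 2 * (Lg * ‖φ t - φ s‖) := by linarith
          _ ≤ 2 * (Lg * (B * (t - s))) := by nlinarith [norm_nonneg (φ t - φ s)]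
          _ = 2 * Lg * B * (t - s) := by ring
    have := h2.const_mul (1/2 : ℝ)
    simp only [mul_zero] at this
    convert this using 2 with t
    · ring
  -- each component of the gap tends to zero
  have htend1 : Tendsto (fun t => F ((φ t).1, pst.2) - v) atTop (𝓝 0) := by
    apply tendsto_of_tendsto_of_tendsto_of_le_of_le' tendsto_const_nhds hgtend
    · filter_upwards [eventually_ge_atTop (0:ℝ)] with t ht
      have := hb1 (φ t).1; linarith
    · filter_upwards [eventually_ge_atTop (0:ℝ)] with t ht
      have := hb2 (φ t).2
      simp only [hgdef]; linarith
  have htend2 : Tendsto (fun t => v - F (pst.1, (φ t).2)) atTop (𝓝 0) := by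
    apply tendsto_of_tendsto_of_tendsto_of_le_of_le' tendsto_const_nhds hgtend
    · filter_upwards [eventually_ge_atTop (0:ℝ)] with t ht
      have := hb2 (φ t).2; linarith
    · filter_upwards [eventually_ge_atTop (0:ℝ)] with t ht
      have := hb1 (φ t).1
      simp only [hgdef]; linarith
  -- the x-component converges to pst.1
  have hxconv : Tendsto (fun t => (φ t).1) atTop (𝓝 pst.1) := by
    apply tendsto_min_of_strict
      (f := fun x => F (x, pst.2))
      (hf := hF.continuous.comp (continuous_id.prodMk continuous_const))
      (hsc := hstrict)
      (hmin := by intro x; simpa using hb1 x)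
      (hK := hK.image continuous_fst)
      (hxK := fun t ht => mem_image_of_mem _ (hφK t ht))
    have : (fun t => F ((φ t).1, pst.2)) = fun t => (F ((φ t).1, pst.2) - v) + v := by
      funext t; ring
    rw [this]
    have hv' : F (pst.1, pst.2) = v := by simp [hvdef]
    rw [hv']
    simpa using htend1.add_const v
  -- a cluster point of the trajectory
  obtain ⟨q, hqK, σ, hσ, hconv⟩ :=
    hK.tendsto_subseq (x := fun k : ℕ => φ (k : ℝ))
      (fun k => hφK (k : ℝ) (by positivity))
  set s : ℕ → ℝ := fun j => ((σ j : ℕ) : ℝ) with hsdef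
  have hs0 : ∀ j, (0:ℝ) ≤ s j := fun j => by positivity
  have hsat : Tendsto s atTop atTop :=
    tendsto_natCast_atTop_atTop.comp hσ.tendsto_atTop
  have hconv' : Tendsto (fun j => φ (s j)) atTop (𝓝 q) := hconv
  -- first coordinate of q
  have hq1 : q.1 = pst.1 := by
    have ha : Tendsto (fun j => (φ (s j)).1) atTop (𝓝 q.1) :=
      (continuous_fst.continuousAt.tendsto).comp hconv'
    have hb : Tendsto (fun j => (φ (s j)).1) atTop (𝓝 pst.1) := hxconv.comp hsat
    exact tendsto_nhds_unique ha hb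
  -- value at q
  have hFq2 : F (pst.1, q.2) = v := by
    have ha : Tendsto (fun j => F (pst.1, (φ (s j)).2)) atTop (𝓝 (F (pst.1, q.2))) := by
      have hcont : Continuous fun z : En m => F (pst.1, z) :=
        hF.continuous.comp (continuous_const.prodMk continuous_id)
      exact (hcont.continuousAt.tendsto).comp
        ((continuous_snd.continuousAt.tendsto).comp hconv')
    have hb : Tendsto (fun j => F (pst.1, (φ (s j)).2)) atTop (𝓝 v) := by
      have := htend2.comp hsat
      have h2 : Tendsto (fun j => v - (v - F (pst.1, (φ (s j)).2))) atTop (𝓝 (v - 0)) :=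
        tendsto_const_nhds.sub this
      simpa using h2
    exact tendsto_nhds_unique ha hb
  -- gradZ vanishes at q
  have hgz : gradZ F q = 0 := by
    apply grad_zero_of_localMax hF
    apply IsMaxOn.isLocalMax (s := univ) _ univ_mem
    intro z _
    simp only
    rw [hq1]
    show F (pst.1, z) ≤ F (pst.1, q.2)
    rw [hFq2]
    exact hb2 z
  -- gradX vanishes at q (quantitative invariance argument)
  have hgx : gradX F q = 0 := by
    by_contra hw
    set w : En n := gradX F q with hwdef
    have hwpos : 0 < ‖w‖ := norm_pos_iff.2 hw
    -- continuity of gradX at q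
    obtain ⟨r, hrpos, hr⟩ := Metric.continuousAt_iff.1
      ((continuous_gradX hF).continuousAt (x := q)) (‖w‖ / 2) (by positivity)
    set δt : ℝ := r / (2 * (B + 1)) with hδtdef
    have hδtpos : 0 < δt := by positivity
    have hBδt : B * δt < r / 2 := by
      rw [hδtdef, mul_div_assoc']
      rw [div_lt_div_iff₀ (by positivity) (by norm_num : (0:ℝ) < 2)]
      nlinarith
    -- ψ and its derivative
    set ψ : ℝ → ℝ := fun t => ⟪(φ t).1 - pst.1, w⟫ with hψdef
    have hψd : ∀ t : ℝ, 0 ≤ t → HasDerivAt ψ ⟪-gradX F (φ t), w⟫ t := by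
      intro t ht
      have h1 := ((hasDerivX hφ ht).sub_const pst.1).inner ℝ (hasDerivAt_const t w)
      simpa using h1
    -- ψ tends to 0
    have hψ0 : Tendsto ψ atTop (𝓝 0) := by
      have h1 : Tendsto (fun t => (φ t).1 - pst.1) atTop (𝓝 (pst.1 - pst.1)) :=
        hxconv.sub_const pst.1
      have h2 : Tendsto (fun t : ℝ => (⟪(φ t).1 - pst.1, w⟫ : ℝ)) atTop
          (𝓝 (⟪pst.1 - pst.1, w⟫ : ℝ)) :=
        Filter.Tendsto.inner (𝕜 := ℝ) h1 tendsto_const_nhds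
      simpa using h2
    -- eventual closeness of φ (s j) to q
    have hev : ∀ᶠ j in atTop, dist (φ (s j)) q < r / 2 := by
      have := (Metric.tendsto_atTop.1 hconv') (r/2) (by positivity)
      obtain ⟨N, hN⟩ := this
      filter_upwards [eventually_ge_atTop N] with j hj using hN j hj
    -- the decrement inequality for large j
    have hdec : ∀ᶠ j in atTop, ψ (s j + δt) ≤ ψ (s j) - ‖w‖^2/2 * δt := by
      filter_upwards [hev] with j hj
      have hwin : ∀ t ∈ Icc (s j) (s j + δt), dist (φ t) q < r := by
        intro t ⟨hta, htb⟩
        calc dist (φ t) q ≤ dist (φ t) (φ (s j)) + dist (φ (s j)) q := dist_triangle _ _ _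
          _ ≤ B * (t - s j) + dist (φ (s j)) q := by
              have := hφLip (s j) t (hs0 j) hta; linarith
          _ < B * δt + r/2 := by
              have h1 : B * (t - s j) ≤ B * δt :=
                mul_le_mul_of_nonneg_left (by linarith) hBpos.le
              exact add_lt_add_of_le_of_lt h1 hj
          _ < r := by linarith
      have hbound : ∀ t ∈ Icc (s j) (s j + δt), ⟪-gradX F (φ t), w⟫ ≤ -(‖w‖^2/2) := by
        intro t ht
        have hd := hr (hwin t ht)
        rw [← hwdef, dist_eq_norm] at hd
        have hcs : -(‖gradX F (φ t) - w‖ * ‖w‖) ≤ ⟪gradX F (φ t) - w, w⟫ := by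
          have := abs_real_inner_le_norm (gradX F (φ t) - w) w
          have := abs_le.1 this
          linarith [this.1]
        have hexp : ⟪gradX F (φ t), w⟫ = ⟪w, w⟫ + ⟪gradX F (φ t) - w, w⟫ := by
          rw [inner_sub_left]; ring
        have hww : ⟪w, w⟫ = ‖w‖^2 := real_inner_self_eq_norm_sq w
        have hprod : ‖gradX F (φ t) - w‖ * ‖w‖ ≤ ‖w‖/2 * ‖w‖ :=
          mul_le_mul_of_nonneg_right hd.le (norm_nonneg w)
        rw [inner_neg_left]
        nlinarith
      have := decrement (W := ψ) (W' := fun t => ⟪-gradX F (φ t), w⟫)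
        (a := s j) (b := s j + δt) (r := ‖w‖^2/2)
        (by linarith)
        (fun t ht => hψd t (le_trans (hs0 j) ht.1))
        (fun t ht => by have := hbound t ht; linarith)
      linarith
    -- contradiction passing to the limit
    have hA : Tendsto (fun j => ψ (s j + δt)) atTop (𝓝 0) :=
      hψ0.comp (tendsto_atTop_add_const_right _ δt hsat)
    have hB2 : Tendsto (fun j => ψ (s j) - ‖w‖^2/2 * δt) atTop (𝓝 (0 - ‖w‖^2/2 * δt)) :=
      (hψ0.comp hsat).sub_const _
    have hle := le_of_tendsto_of_tendsto hA hB2 hdec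
    have : (0:ℝ) < ‖w‖^2/2 * δt := by positivity
    simp only [zero_sub] at hle
    linarith
  -- q is a saddle point
  obtain ⟨hqb1, hqb2⟩ := bounds_of_grad_zero hF hcc hgx hgz
  -- the trajectory converges to q
  refine ⟨q, hqb1, hqb2, ?_⟩
  rw [Metric.tendsto_atTop]
  intro ε hε
  have hdo : Tendsto (fun j => dist (φ (s j)) q) atTop (𝓝 0) := by
    simpa using hconv'.dist (tendsto_const_nhds (x := q))
  obtain ⟨J, hJ⟩ := (Metric.tendsto_atTop.1 hdo) (ε/2/2) (by positivity)
  refine ⟨s J, fun t ht => ?_⟩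
  have hsqrt2 : Real.sqrt 2 ≤ 2 := by
    nlinarith [Real.sq_sqrt (by norm_num : (0:ℝ) ≤ 2), Real.sqrt_nonneg 2]
  have hdj : dist (φ (s J)) q < ε/2/2 := by
    have := hJ J le_rfl
    rwa [Real.dist_0_eq_abs, abs_of_nonneg dist_nonneg] at this
  calc dist (φ t) q ≤ Real.sqrt 2 * dist (φ (s J)) q :=
        dist_traj_le hF hcc hφ hqb1 hqb2 (hs0 J) ht
    _ ≤ 2 * dist (φ (s J)) q := mul_le_mul_of_nonneg_right hsqrt2 dist_nonneg
    _ < ε := by linarith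

lemma saddle_of_bounds {n m : ℕ} {F : En n × En m → ℝ} {q : En n × En m}
    (hb1 : ∀ x, F q ≤ F (x, q.2)) (hb2 : ∀ z, F (q.1, z) ≤ F q) : IsSaddlePoint F q :=
  ⟨univ, univ, isOpen_univ, isOpen_univ, mem_univ _, mem_univ _,
    fun x _ z _ => ⟨hb2 z, hb1 x⟩⟩

/-- The swapped-negated case: `z ↦ F (p*.1, z)` strictly concave. -/
theorem main_conc {n m : ℕ} (F : En n × En m → ℝ) (hF : ContDiff ℝ 1 F)
    (hcc : ∀ q : En n × En m,
      ConvexOn ℝ univ (fun x => F (x, q.2)) ∧ ConcaveOn ℝ univ (fun z => F (q.1, z)))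
    (pst : En n × En m)
    (hb1 : ∀ x, F pst ≤ F (x, pst.2)) (hb2 : ∀ z, F (pst.1, z) ≤ F pst)
    (hstrict : StrictConcaveOn ℝ univ (fun z => F (pst.1, z)))
    (φ : ℝ → En n × En m) (hφ : IsTrajectory F φ) :
    ∃ q : En n × En m, (∀ x, F q ≤ F (x, q.2)) ∧ (∀ z, F (q.1, z) ≤ F q)
      ∧ Tendsto φ atTop (𝓝 q) := by
  set G : En m × En n → ℝ := fun r => -F (r.2, r.1) with hGdef
  have hG : ContDiff ℝ 1 G := (hF.comp (contDiff_snd.prodMk contDiff_fst)).neg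
  have hgradXG : ∀ r : En m × En n, gradX G r = -gradZ F (r.2, r.1) := by
    intro r
    exact HasGradientAt.gradient ((hasGradZ hF (r.2, r.1)).neg')
  have hgradZG : ∀ r : En m × En n, gradZ G r = -gradX F (r.2, r.1) := by
    intro r
    exact HasGradientAt.gradient ((hasGradX hF (r.2, r.1)).neg')
  set ψ : ℝ → En m × En n := fun t => ((φ t).2, (φ t).1) with hψdef
  have hψtraj : IsTrajectory G ψ := by
    intro t ht
    have h1 := hasDerivX hφ ht
    have h2 := hasDerivZ hφ ht
    have h3 : HasDerivAt ψ (gradZ F (φ t), -gradX F (φ t)) t := h2.prodMk h1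
    have heq : Xsp G (ψ t) = (gradZ F (φ t), -gradX F (φ t)) := by
      simp only [Xsp, hgradXG, hgradZG, hψdef, Prod.mk.eta, neg_neg]
    rw [heq]
    exact h3
  have hcc' : ∀ r : En m × En n,
      ConvexOn ℝ univ (fun z => G (z, r.2)) ∧ ConcaveOn ℝ univ (fun x => G (r.1, x)) := by
    intro r
    constructor
    · exact (hcc (r.2, r.1)).2.neg
    · exact (hcc (r.2, r.1)).1.neg
  set pst' : En m × En n := (pst.2, pst.1) with hpst'def
  have hGpst' : G pst' = -F pst := by simp [hGdef, hpst'def]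
  have hb1' : ∀ z, G pst' ≤ G (z, pst'.2) := by
    intro z
    have := hb2 z
    simp only [hGdef, hpst'def, hGpst']
    simpa using this
  have hb2' : ∀ x, G (pst'.1, x) ≤ G pst' := by
    intro x
    have := hb1 x
    simp only [hGdef, hpst'def, hGpst']
    simpa using this
  have hGpst'2 : G pst' ≤ G pst' := le_refl _
  have hstrict' : StrictConvexOn ℝ univ (fun z => G (z, pst'.2)) := by
    have h := hstrict.neg
    have heq : (fun z => G (z, pst'.2)) = -(fun z => F (pst.1, z)) := by
      funext z; simp [hGdef, hpst'def]
    rw [heq]; exact h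
  obtain ⟨q', hq'1, hq'2, hq't⟩ :=
    main_conv G hG hcc' pst' (by simpa [hGpst'] using hb1') (by simpa [hGpst'] using hb2')
      hstrict' ψ hψtraj
  refine ⟨(q'.2, q'.1), ?_, ?_, ?_⟩
  · intro x
    have h := hq'2 x
    simp only [hGdef] at h
    show F (q'.2, q'.1) ≤ F (x, q'.1)
    linarith
  · intro z
    have h := hq'1 z
    simp only [hGdef] at h
    show F (q'.2, z) ≤ F (q'.2, q'.1)
    linarith
  · have hsw : Tendsto (fun t => ((ψ t).2, (ψ t).1)) atTop (𝓝 (q'.2, q'.1)) :=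
      ((continuous_snd.prodMk continuous_fst).continuousAt.tendsto).comp hq't
    have : (fun t => ((ψ t).2, (ψ t).1)) = φ := by
      funext t; simp [hψdef]
    rwa [this] at hsw
/-- Corollary: global asymptotic stability of the set of saddle points via
convexity-concavity. If `F` is `C¹` and globally strictly convex-concave with nonempty saddle
set, then the saddle set is globally asymptotically stable: every saddle point is stable and
every trajectory converges to a single saddle point. -/
theorem stmt_1 {n m : ℕ} (F : En n × En m → ℝ) (hF : ContDiff ℝ 1 F)
    (hne : (SaddleSet F).Nonempty)
    (hcc : ∀ q : En n × En m,
      ConvexOn ℝ univ (fun x => F (x, q.2)) ∧ ConcaveOn ℝ univ (fun z => F (q.1, z)))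
    (hstrict : ∀ q : En n × En m,
      StrictConvexOn ℝ univ (fun x => F (x, q.2)) ∨
        StrictConcaveOn ℝ univ (fun z => F (q.1, z))) :
    (∀ p ∈ SaddleSet F, StablePt F p) ∧
    (∀ φ : ℝ → En n × En m, IsTrajectory F φ →
      ∃ q ∈ SaddleSet F, Tendsto φ atTop (𝓝 q)) := by
  have hsqrt2 : Real.sqrt 2 ≤ 2 := by
    nlinarith [Real.sq_sqrt (by norm_num : (0:ℝ) ≤ 2), Real.sqrt_nonneg 2]
  constructor
  · -- stability of each saddle point
    intro p hp ε hε
    obtain ⟨hb1, hb2⟩ := saddle_global hF hcc hp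
    refine ⟨ε / 2, by positivity, ?_⟩
    intro φ hφ hd0 t ht
    calc dist (φ t) p ≤ Real.sqrt 2 * dist (φ 0) p :=
          dist_traj_le hF hcc hφ hb1 hb2 le_rfl ht
      _ ≤ 2 * dist (φ 0) p := mul_le_mul_of_nonneg_right hsqrt2 dist_nonneg
      _ < 2 * (ε / 2) := by exact mul_lt_mul_of_pos_left hd0 (by norm_num)
      _ = ε := by ring
  · -- convergence of every trajectory
    intro φ hφ
    obtain ⟨pst, hpst⟩ := hne
    obtain ⟨hb1, hb2⟩ := saddle_global hF hcc hpst
    rcases hstrict pst with hsx | hsz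
    · obtain ⟨q, hq1, hq2, hqt⟩ := main_conv F hF hcc pst hb1 hb2 hsx φ hφ
      exact ⟨q, saddle_of_bounds hq1 hq2, hqt⟩
    · obtain ⟨q, hq1, hq2, hqt⟩ := main_conc F hF hcc pst hb1 hb2 hsz φ hφ
      exact ⟨q, saddle_of_bounds hq1 hq2, hqt⟩
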